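/- For any Boolean function f : {0,1}^n → {0,1}, W(f) ≤ Inf[f]/2 ≤ deg(f)/2, where W(f) = Σ_{i ∈ R(f)} 2^{−deg_i(f)}. -/

import Mathlib

open MvPolynomial Finset
open scoped Classical

/-- `bval` converts a boolean to the real number 0 or 1. -/
def bval (x : Bool) : ℝ := if x then 1 else 0

/-- `Represents P f` : `P` is the multilinear real polynomial representing the
Boolean function `f : {0,1}^n → {0,1}`. -/
def Represents {n : ℕ} (P : MvPolynomial (Fin n) ℝ) (f : (Fin n → Bool) → Bool) : Prop :=
  (∀ m ∈ P.support, ∀ i, m i ≤ 1) ∧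
  ∀ x : Fin n → Bool, MvPolynomial.eval (fun i => bval (x i)) P = bval (f x)

/-- Flip the `i`-th bit of `x`. -/
def flip1 {n : ℕ} (x : Fin n → Bool) (i : Fin n) : Fin n → Bool :=
  Function.update x i (!(x i))

/-- Coordinate `i` is relevant for `f`. -/
def Relevant {n : ℕ} (f : (Fin n → Bool) → Bool) (i : Fin n) : Prop :=
  ∃ x, f (flip1 x i) ≠ f x

/-- The set of relevant coordinates of `f`. -/
noncomputable def relSet {n : ℕ} (f : (Fin n → Bool) → Bool) : Finset (Fin n) :=
  Finset.univ.filter fun i => Relevant f i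

/-- The influence of coordinate `i` on `f`. -/
noncomputable def influence {n : ℕ} (f : (Fin n → Bool) → Bool) (i : Fin n) : ℝ :=
  ((Finset.univ.filter fun x => f (flip1 x i) ≠ f x).card : ℝ) / 2 ^ n

/-- `degI P i` : the maximal degree of a monomial of `P` containing `x i`. -/
noncomputable def degI {n : ℕ} (P : MvPolynomial (Fin n) ℝ) (i : Fin n) : ℕ :=
  (P.support.filter fun m => m i ≠ 0).sup fun m => m.sum fun _ e => e

/-- `W P f = Σ_{i ∈ R(f)} 2^{-deg_i(f)}`, computed via the representing polynomial `P`. -/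
noncomputable def W {n : ℕ} (P : MvPolynomial (Fin n) ℝ) (f : (Fin n → Bool) → Bool) : ℝ :=
  ∑ i ∈ relSet f, ((2:ℝ) ^ degI P i)⁻¹

/-- Flip the bits of `x` in the block `B`. -/
def flipB {n : ℕ} (x : Fin n → Bool) (B : Finset (Fin n)) : Fin n → Bool :=
  fun j => if j ∈ B then !(x j) else x j

/-- `f` has `b` pairwise disjoint sensitive blocks at some input. -/
def HasSensBlocks {n : ℕ} (f : (Fin n → Bool) → Bool) (b : ℕ) : Prop :=
  ∃ (x : Fin n → Bool) (B : Fin b → Finset (Fin n)),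
    (∀ j k, j ≠ k → Disjoint (B j) (B k)) ∧ ∀ j, f (flipB x (B j)) ≠ f x

/-- The block sensitivity of `f`. -/
noncomputable def bs {n : ℕ} (f : (Fin n → Bool) → Bool) : ℕ :=
  sSup {b | HasSensBlocks f b}

/-- Restriction of `f` fixing the coordinates in `H` according to `α`. -/
def restrict {n : ℕ} (f : (Fin n → Bool) → Bool) (H : Finset (Fin n)) (α : Fin n → Bool) :
    (Fin n → Bool) → Bool :=
  fun x => f fun i => if i ∈ H then α i else x i

/-- The multilinear monomial (exponent vector) with support `S`. -/
noncomputable def monOf {n : ℕ} (S : Finset (Fin n)) : Fin n →₀ ℕ :=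
  ∑ j ∈ S, Finsupp.single j 1

namespace Aux
open scoped symmDiff
variable {n : ℕ}

noncomputable def bsign (b : Bool) : ℝ := if b then -1 else 1

lemma bsign_sq (b : Bool) : bsign b * bsign b = 1 := by cases b <;> simp [bsign]

noncomputable def chi (S : Finset (Fin n)) (x : Fin n → Bool) : ℝ := ∏ j ∈ S, bsign (x j)

lemma chi_mul (S T : Finset (Fin n)) (x : Fin n → Bool) :
    chi S x * chi T x = chi (S ∆ T) x := by
  have h1 : chi S x * chi T x = chi (S ∪ T) x * chi (S ∩ T) x := by
    rw [chi, chi, chi, chi, Finset.prod_union_inter]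
  have h2 : chi (S ∪ T) x = chi (S ∆ T) x * chi (S ∩ T) x := by
    have hu : S ∪ T = S ∆ T ∪ S ∩ T := ((symmDiff_sup_inf S T).symm : _)
    have hd : Disjoint (S ∆ T) (S ∩ T) := disjoint_symmDiff_inf S T
    rw [chi, chi, chi, hu, Finset.prod_union hd]
  have h3 : chi (S ∩ T) x * chi (S ∩ T) x = 1 := by
    rw [chi, ← Finset.prod_mul_distrib]
    exact Finset.prod_eq_one fun j _ => bsign_sq (x j)
  rw [h1, h2, mul_assoc, h3, mul_one]

lemma flip1_flip1 (x : Fin n → Bool) (i : Fin n) : flip1 (flip1 x i) i = x := by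
  funext j
  by_cases h : j = i
  · subst h; simp [flip1]
  · simp [flip1, Function.update_of_ne h]

lemma flip1_apply_ne (x : Fin n → Bool) (i j : Fin n) (h : j ≠ i) : flip1 x i j = x j := by
  simp [flip1, Function.update_of_ne h]

lemma flip1_apply (x : Fin n → Bool) (i : Fin n) : flip1 x i i = !(x i) := by
  simp [flip1]

lemma chi_flip (S : Finset (Fin n)) (x : Fin n → Bool) (i : Fin n) :
    chi S (flip1 x i) = (if i ∈ S then -1 else 1) * chi S x := by
  by_cases hi : i ∈ S
  · rw [if_pos hi, chi, chi, ← Finset.mul_prod_erase S _ hi, ← Finset.mul_prod_erase S _ hi]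
    have h1 : ∀ j ∈ S.erase i, bsign (flip1 x i j) = bsign (x j) := fun j hj => by
      rw [flip1_apply_ne x i j (Finset.ne_of_mem_erase hj)]
    rw [Finset.prod_congr rfl h1, flip1_apply]
    cases x i <;> simp [bsign]
  · rw [if_neg hi, one_mul, chi, chi]
    exact Finset.prod_congr rfl fun j hj => by
      rw [flip1_apply_ne x i j (fun h => hi (h ▸ hj))]


lemma sum_chi (S : Finset (Fin n)) :
    ∑ x : Fin n → Bool, chi S x = if S = ∅ then 2 ^ n else 0 := by
  have key : ∀ x : Fin n → Bool, chi S x =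
      ∏ j : Fin n, (if j ∈ S then bsign (x j) else 1) := by
    intro x
    rw [chi, Finset.prod_ite_mem, Finset.univ_inter]
  have h := Finset.prod_univ_sum (fun _ : Fin n => (Finset.univ : Finset Bool))
      (fun j b => if j ∈ S then bsign b else 1)
  simp only [Fintype.piFinset_univ] at h
  calc ∑ x : Fin n → Bool, chi S x
      = ∑ x : Fin n → Bool, ∏ j : Fin n, (if j ∈ S then bsign (x j) else 1) :=
        Finset.sum_congr rfl fun x _ => key x
    _ = ∏ j : Fin n, ∑ b : Bool, (if j ∈ S then bsign b else 1) := h.symm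
    _ = ∏ j : Fin n, (if j ∈ S then 0 else 2) := by
        refine Finset.prod_congr rfl fun j _ => ?_
        by_cases hj : j ∈ S <;> simp [hj, bsign]
    _ = if S = ∅ then 2 ^ n else 0 := by
        by_cases hS : S = ∅
        · simp [hS]
        · rw [if_neg hS]
          obtain ⟨j, hj⟩ := Finset.nonempty_iff_ne_empty.2 hS
          exact Finset.prod_eq_zero (Finset.mem_univ j) (by simp [hj])

lemma sum_chi_mul (S T : Finset (Fin n)) :
    ∑ x : Fin n → Bool, chi S x * chi T x = if S = T then 2 ^ n else 0 := by
  have : ∀ x : Fin n → Bool, chi S x * chi T x = chi (S ∆ T) x := fun x => chi_mul S T x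
  rw [Finset.sum_congr rfl fun x _ => this x, sum_chi]
  have : S ∆ T = ∅ ↔ S = T := symmDiff_eq_bot
  by_cases h : S = T
  · rw [if_pos h, if_pos (this.2 h)]
  · rw [if_neg h, if_neg (fun he => h (this.1 he))]

lemma sum_chi_point (x y : Fin n → Bool) :
    ∑ S : Finset (Fin n), chi S x * chi S y = if x = y then 2 ^ n else 0 := by
  have key : ∀ S : Finset (Fin n), chi S x * chi S y =
      ∏ j ∈ S, (bsign (x j) * bsign (y j)) := by
    intro S; rw [chi, chi, Finset.prod_mul_distrib]
  calc ∑ S : Finset (Fin n), chi S x * chi S y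
      = ∑ S ∈ (Finset.univ : Finset (Fin n)).powerset,
          (∏ j ∈ S, (bsign (x j) * bsign (y j))) * ∏ j ∈ Finset.univ \ S, 1 := by
        rw [Finset.powerset_univ]
        exact Finset.sum_congr rfl fun S _ => by rw [key S, Finset.prod_const_one, mul_one]
    _ = ∏ j : Fin n, (bsign (x j) * bsign (y j) + 1) := (Finset.prod_add _ _ _).symm
    _ = if x = y then 2 ^ n else 0 := by
        by_cases h : x = y
        · subst h
          rw [if_pos rfl]
          calc ∏ j : Fin n, (bsign (x j) * bsign (x j) + 1)
              = ∏ _j : Fin n, (2:ℝ) := Finset.prod_congr rfl fun j _ => by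
                rw [bsign_sq]; norm_num
            _ = 2 ^ n := by simp
        · rw [if_neg h]
          obtain ⟨j, hj⟩ : ∃ j, x j ≠ y j := by
            by_contra hc
            push_neg at hc
            exact h (funext hc)
          refine Finset.prod_eq_zero (Finset.mem_univ j) ?_
          cases hx : x j <;> cases hy : y j <;> simp_all [bsign]


variable (f : (Fin n → Bool) → Bool)

noncomputable def hh (x : Fin n → Bool) : ℝ := 1 - 2 * bval (f x)

lemma hh_sq (x : Fin n → Bool) : hh f x * hh f x = 1 := by
  cases h : f x <;> simp [hh, bval, h] <;> norm_num

noncomputable def hat (S : Finset (Fin n)) : ℝ := (∑ x : Fin n → Bool, hh f x * chi S x) / 2 ^ n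

lemma two_pow_ne (n : ℕ) : ((2:ℝ) ^ n) ≠ 0 := by positivity

lemma inversion (x : Fin n → Bool) : ∑ S : Finset (Fin n), hat f S * chi S x = hh f x := by
  have : ∀ S : Finset (Fin n), hat f S * chi S x =
      (∑ y : Fin n → Bool, hh f y * (chi S y * chi S x)) / 2 ^ n := by
    intro S
    rw [hat, div_mul_eq_mul_div, Finset.sum_mul]
    congr 1
    exact Finset.sum_congr rfl fun y _ => by ring
  rw [Finset.sum_congr rfl fun S _ => this S, ← Finset.sum_div, Finset.sum_comm]
  have : ∀ y : Fin n → Bool, ∑ S : Finset (Fin n), hh f y * (chi S y * chi S x) =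
      hh f y * (if y = x then (2:ℝ) ^ n else 0) := by
    intro y
    rw [← Finset.mul_sum, sum_chi_point]
  rw [Finset.sum_congr rfl fun y _ => this y]
  simp only [mul_ite, mul_zero]
  rw [Finset.sum_ite_eq' Finset.univ x (fun y => hh f y * 2 ^ n)]
  simp [mul_div_assoc, two_pow_ne n]

lemma parseval : ∑ S : Finset (Fin n), hat f S * hat f S = 1 := by
  have h1 : ∀ S : Finset (Fin n), hat f S * hat f S =
      (∑ x : Fin n → Bool, hh f x * (hat f S * chi S x)) / 2 ^ n := by
    intro S
    have hc : ∀ x : Fin n → Bool, hh f x * (hat f S * chi S x) =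
        hat f S * (hh f x * chi S x) := fun x => by ring
    rw [Finset.sum_congr rfl fun x _ => hc x, ← Finset.mul_sum, hat]
    ring
  rw [Finset.sum_congr rfl fun S _ => h1 S, ← Finset.sum_div, Finset.sum_comm]
  have h2 : ∀ x : Fin n → Bool, ∑ S : Finset (Fin n), hh f x * (hat f S * chi S x) = 1 := by
    intro x
    rw [← Finset.mul_sum, inversion, hh_sq]
  rw [Finset.sum_congr rfl fun x _ => h2 x]
  simp [two_pow_ne n]

lemma sum_hh_chi (S : Finset (Fin n)) :
    ∑ x : Fin n → Bool, hh f x * chi S x = 2 ^ n * hat f S := by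
  rw [hat, mul_div_assoc']
  rw [mul_comm ((2:ℝ)^n), mul_div_assoc, div_self (two_pow_ne n), mul_one]

lemma sum_hh_flip (i : Fin n) :
    ∑ x : Fin n → Bool, hh f x * hh f (flip1 x i)
      = 2 ^ n * ∑ S : Finset (Fin n), (if i ∈ S then (-1:ℝ) else 1) * (hat f S * hat f S) := by
  have h1 : ∀ x, hh f (flip1 x i) =
      ∑ S : Finset (Fin n), (if i ∈ S then (-1:ℝ) else 1) * (hat f S * chi S x) := by
    intro x
    rw [← inversion f (flip1 x i)]
    refine Finset.sum_congr rfl fun S _ => ?_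
    rw [chi_flip]
    ring
  calc ∑ x : Fin n → Bool, hh f x * hh f (flip1 x i)
      = ∑ x : Fin n → Bool, ∑ S : Finset (Fin n),
          (if i ∈ S then (-1:ℝ) else 1) * hat f S * (hh f x * chi S x) := by
        refine Finset.sum_congr rfl fun x _ => ?_
        rw [h1, Finset.mul_sum]
        exact Finset.sum_congr rfl fun S _ => by ring
    _ = ∑ S : Finset (Fin n), ∑ x : Fin n → Bool,
          (if i ∈ S then (-1:ℝ) else 1) * hat f S * (hh f x * chi S x) := Finset.sum_comm
    _ = ∑ S : Finset (Fin n), (if i ∈ S then (-1:ℝ) else 1) * hat f S * (2 ^ n * hat f S) := by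
        refine Finset.sum_congr rfl fun S _ => ?_
        rw [← Finset.mul_sum, sum_hh_chi]
    _ = 2 ^ n * ∑ S : Finset (Fin n), (if i ∈ S then (-1:ℝ) else 1) * (hat f S * hat f S) := by
        rw [Finset.mul_sum]
        exact Finset.sum_congr rfl fun S _ => by ring

lemma card_cube : (Fintype.card (Fin n → Bool) : ℝ) = 2 ^ n := by
  rw [Fintype.card_fun]
  simp

lemma influence_eq (i : Fin n) :
    influence f i = ∑ S : Finset (Fin n),
      (if i ∈ S then (1:ℝ) else 0) * (hat f S * hat f S) := by
  have hcard : ((Finset.univ.filter fun x : Fin n → Bool => f (flip1 x i) ≠ f x).card : ℝ)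
      = ∑ x : Fin n → Bool, (if f (flip1 x i) ≠ f x then (1:ℝ) else 0) := by
    rw [Finset.sum_boole, Finset.filter_congr_decidable]
  have hind : ∀ x, (if f (flip1 x i) ≠ f x then (1:ℝ) else 0)
      = (1 - hh f x * hh f (flip1 x i)) / 2 := by
    intro x
    cases h1 : f x <;> cases h2 : f (flip1 x i) <;>
      simp [hh, bval, h1, h2] <;> norm_num
  have key : influence f i =
      (1 - ∑ S : Finset (Fin n), (if i ∈ S then (-1:ℝ) else 1) * (hat f S * hat f S)) / 2 := by
    rw [influence, hcard, Finset.sum_congr rfl fun x _ => hind x, ← Finset.sum_div,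
      Finset.sum_sub_distrib, sum_hh_flip]
    rw [Finset.sum_const, Finset.card_univ, nsmul_eq_mul, card_cube]
    field_simp
  have expand : ∀ S : Finset (Fin n), (if i ∈ S then (1:ℝ) else 0) * (hat f S * hat f S)
      = (hat f S * hat f S - (if i ∈ S then (-1:ℝ) else 1) * (hat f S * hat f S)) / 2 := by
    intro S
    by_cases h : i ∈ S <;> simp [h] <;> ring
  rw [key, Finset.sum_congr rfl fun S _ => expand S, ← Finset.sum_div,
    Finset.sum_sub_distrib, parseval]

lemma sum_chi_mon (S : Finset (Fin n)) (m : Fin n →₀ ℕ) (j0 : Fin n)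
    (hj0S : j0 ∈ S) (hj0m : j0 ∉ m.support) :
    ∑ x : Fin n → Bool, chi S x * ∏ j ∈ m.support, bval (x j) ^ m j = 0 := by
  refine Finset.sum_ninvolution (fun x => flip1 x j0) ?_ ?_
    (fun x => Finset.mem_univ _) (fun x => flip1_flip1 x j0)
  · intro x
    have h1 : chi S (flip1 x j0) = -chi S x := by rw [chi_flip]; simp [hj0S]
    have h2 : ∏ j ∈ m.support, bval (flip1 x j0 j) ^ m j
        = ∏ j ∈ m.support, bval (x j) ^ m j :=
      Finset.prod_congr rfl fun j hj => by
        rw [flip1_apply_ne x j0 j (fun h => hj0m (h ▸ hj))]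
    rw [h1, h2]; ring
  · intro x _ he
    change flip1 x j0 = x at he
    have := congrFun he j0
    rw [flip1_apply] at this
    cases hb : x j0 <;> rw [hb] at this <;> simp at this

lemma card_le_sum (m : Fin n →₀ ℕ) : m.support.card ≤ m.sum fun _ e => e := by
  rw [Finsupp.sum]
  calc m.support.card = ∑ _j ∈ m.support, 1 := by simp
    _ ≤ ∑ j ∈ m.support, m j := Finset.sum_le_sum fun j hj =>
        Nat.one_le_iff_ne_zero.2 (Finsupp.mem_support_iff.1 hj)

lemma hat_eq_zero {P : MvPolynomial (Fin n) ℝ} (hP : Represents P f) (S : Finset (Fin n))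
    (hS : P.totalDegree < S.card) : hat f S = 0 := by
  have hSne : S ≠ ∅ := by
    intro h; subst h; simp at hS
  have hb : ∀ x : Fin n → Bool, bval (f x)
      = ∑ m ∈ P.support, P.coeff m * ∏ j ∈ m.support, bval (x j) ^ m j := by
    intro x; rw [← hP.2 x, MvPolynomial.eval_eq]
  have hmain : ∑ x : Fin n → Bool, hh f x * chi S x = 0 := by
    have hsplit : ∀ x, hh f x * chi S x = chi S x - 2 * (bval (f x) * chi S x) := by
      intro x; rw [hh]; ring
    rw [Finset.sum_congr rfl fun x _ => hsplit x, Finset.sum_sub_distrib, sum_chi, if_neg hSne]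
    have h2 : ∑ x : Fin n → Bool, bval (f x) * chi S x = 0 := by
      calc ∑ x : Fin n → Bool, bval (f x) * chi S x
          = ∑ x : Fin n → Bool, ∑ m ∈ P.support,
              P.coeff m * (chi S x * ∏ j ∈ m.support, bval (x j) ^ m j) := by
            refine Finset.sum_congr rfl fun x _ => ?_
            rw [hb x, Finset.sum_mul]
            exact Finset.sum_congr rfl fun m _ => by ring
        _ = ∑ m ∈ P.support, P.coeff m *
              ∑ x : Fin n → Bool, chi S x * ∏ j ∈ m.support, bval (x j) ^ m j := by
            rw [Finset.sum_comm]
            exact Finset.sum_congr rfl fun m _ => (Finset.mul_sum _ _ _).symm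
        _ = 0 := by
            refine Finset.sum_eq_zero fun m hm => ?_
            obtain ⟨j0, hj0S, hj0m⟩ : ∃ j0 ∈ S, j0 ∉ m.support := by
              by_contra hc
              push_neg at hc
              have h1 : S.card ≤ m.support.card := Finset.card_le_card hc
              have h2 : m.support.card ≤ m.sum fun _ e => e := card_le_sum m
              have h3 : (m.sum fun _ e => e) ≤ P.totalDegree := MvPolynomial.le_totalDegree hm
              omega
            rw [sum_chi_mon S m j0 hj0S hj0m, mul_zero]
    rw [← Finset.mul_sum, h2]
    ring
  rw [hat, hmain, zero_div]

lemma sum_influence_le {P : MvPolynomial (Fin n) ℝ} (hP : Represents P f) :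
    ∑ i, influence f i ≤ (P.totalDegree : ℝ) := by
  calc ∑ i, influence f i
      = ∑ i : Fin n, ∑ S : Finset (Fin n),
          (if i ∈ S then (1:ℝ) else 0) * (hat f S * hat f S) :=
        Finset.sum_congr rfl fun i _ => influence_eq f i
    _ = ∑ S : Finset (Fin n), (S.card : ℝ) * (hat f S * hat f S) := by
        rw [Finset.sum_comm]
        refine Finset.sum_congr rfl fun S _ => ?_
        rw [← Finset.sum_mul]
        congr 1
        rw [Finset.sum_boole]
        simp [Finset.filter_mem_eq_inter]
    _ ≤ ∑ S : Finset (Fin n), (P.totalDegree : ℝ) * (hat f S * hat f S) := by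
        refine Finset.sum_le_sum fun S _ => ?_
        by_cases h : hat f S = 0
        · rw [h]; simp
        · have hc : S.card ≤ P.totalDegree := by
            by_contra hgt
            push_neg at hgt
            exact h (hat_eq_zero f hP S hgt)
          exact mul_le_mul_of_nonneg_right (by exact_mod_cast hc) (mul_self_nonneg _)
    _ = (P.totalDegree : ℝ) := by
        rw [← Finset.mul_sum, parseval, mul_one]

lemma prod_bval (m : Fin n →₀ ℕ) (y : Fin n → Bool) :
    (∏ j ∈ m.support, bval (y j) ^ m j)
      = (if ∀ j ∈ m.support, y j = true then 1 else 0) := by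
  by_cases h : ∀ j ∈ m.support, y j = true
  · rw [if_pos h]
    exact Finset.prod_eq_one fun j hj => by rw [h j hj]; simp [bval]
  · rw [if_neg h]
    push_neg at h
    obtain ⟨j, hj, hyj⟩ := h
    refine Finset.prod_eq_zero hj ?_
    have hyf : y j = false := by
      cases hc : y j
      · rfl
      · exact absurd hc hyj
    rw [hyf]
    simp only [bval, Bool.false_eq_true, if_false]
    exact zero_pow (Finsupp.mem_support_iff.1 hj)

lemma ind_repr {P : MvPolynomial (Fin n) ℝ} (hP : Represents P f) (y : Fin n → Bool) :
    bval (f y) = ∑ m ∈ P.support, P.coeff m *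
      (if ∀ j ∈ m.support, y j = true then 1 else 0) := by
  rw [← hP.2 y, MvPolynomial.eval_eq]
  exact Finset.sum_congr rfl fun m _ => by rw [prod_bval]

lemma ml_apply {m : Fin n →₀ ℕ} (hm : ∀ j, m j ≤ 1) (j : Fin n) :
    m j = if j ∈ m.support then 1 else 0 := by
  by_cases h : j ∈ m.support
  · rw [if_pos h]
    have h1 := hm j
    have h2 := Finsupp.mem_support_iff.1 h
    omega
  · rw [if_neg h]
    exact Finsupp.notMem_support_iff.1 h

lemma ml_sum {m : Fin n →₀ ℕ} (hm : ∀ j, m j ≤ 1) :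
    (m.sum fun _ e => e) = m.support.card := by
  rw [Finsupp.sum]
  calc ∑ j ∈ m.support, m j = ∑ _j ∈ m.support, 1 :=
        Finset.sum_congr rfl fun j hj => by rw [ml_apply hm j, if_pos hj]
    _ = m.support.card := by simp

lemma ml_ext {m m' : Fin n →₀ ℕ} (hm : ∀ j, m j ≤ 1) (hm' : ∀ j, m' j ≤ 1)
    (h : m.support = m'.support) : m = m' := by
  ext j
  rw [ml_apply hm j, ml_apply hm' j, h]

lemma alt_sum (A T : Finset (Fin n)) (hA : A ⊆ T) :
    ∑ w ∈ T.powerset, (-1:ℝ) ^ ((T \ w).card) * (if A ⊆ w then 1 else 0)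
      = if A = T then 1 else 0 := by
  have key : ∀ w ∈ T.powerset,
      (-1:ℝ) ^ ((T \ w).card) * (if A ⊆ w then 1 else 0)
        = (∏ _j ∈ w, (1:ℝ)) * ∏ j ∈ T \ w, (if j ∈ A then 0 else -1) := by
    intro w hw
    rw [Finset.prod_const_one, one_mul]
    by_cases h : A ⊆ w
    · rw [if_pos h, mul_one]
      rw [Finset.prod_congr rfl (fun j hj => if_neg fun hjA =>
        (Finset.mem_sdiff.1 hj).2 (h hjA)), Finset.prod_const]
    · rw [if_neg h, mul_zero]
      obtain ⟨j, hjA, hjw⟩ := Finset.not_subset.1 h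
      exact (Finset.prod_eq_zero (Finset.mem_sdiff.2 ⟨hA hjA, hjw⟩) ((if_pos hjA : (if j ∈ A then (0:ℝ) else -1) = 0))).symm
  rw [Finset.sum_congr rfl key, ← Finset.prod_add]
  by_cases h : A = T
  · subst h
    rw [if_pos rfl]
    exact Finset.prod_eq_one fun j hj => by rw [if_pos hj]; norm_num
  · rw [if_neg h]
    obtain ⟨j, hjT, hjA⟩ : ∃ j ∈ T, j ∉ A := by
      by_contra hc
      push_neg at hc
      exact h (Finset.Subset.antisymm hA hc)
    exact Finset.prod_eq_zero hjT (by rw [if_neg hjA]; norm_num)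

lemma influence_lower {P : MvPolynomial (Fin n) ℝ} (hP : Represents P f) (i : Fin n)
    (hrel : Relevant f i) :
    2 * ((2:ℝ) ^ degI P i)⁻¹ ≤ influence f i := by
  classical
  set G := P.support.filter (fun m => m i ≠ 0) with hG
  set D : (Fin n → Bool) → ℝ := fun x => ∑ m ∈ G, P.coeff m *
    (if ∀ j ∈ m.support.erase i, x j = true then 1 else 0) with hD
  -- the derivative identity
  have deriv : ∀ x : Fin n → Bool,
      bval (f (Function.update x i true)) - bval (f (Function.update x i false)) = D x := by
    intro x
    rw [ind_repr f hP, ind_repr f hP, ← Finset.sum_sub_distrib]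
    simp only [hD]
    rw [hG, Finset.sum_filter]
    refine Finset.sum_congr rfl fun m hm => ?_
    by_cases hmi : m i ≠ 0
    · rw [if_pos hmi, ← mul_sub]
      congr 1
      have himem : i ∈ m.support := Finsupp.mem_support_iff.2 hmi
      have h1 : (∀ j ∈ m.support, Function.update x i true j = true)
          ↔ (∀ j ∈ m.support.erase i, x j = true) := by
        constructor
        · intro h j hj
          have := h j (Finset.mem_of_mem_erase hj)
          rwa [Function.update_of_ne (Finset.ne_of_mem_erase hj)] at this
        · intro h j hj
          by_cases hji : j = i
          · subst hji; rw [Function.update_self]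
          · rw [Function.update_of_ne hji]
            exact h j (Finset.mem_erase.2 ⟨hji, hj⟩)
      have h0 : ¬ (∀ j ∈ m.support, Function.update x i false j = true) := by
        intro h
        have := h i himem
        rw [Function.update_self] at this
        exact Bool.false_ne_true this
      rw [if_neg h0, sub_zero]
      by_cases h : ∀ j ∈ m.support.erase i, x j = true
      · rw [if_pos h, if_pos (h1.2 h)]
      · rw [if_neg h, if_neg (fun hh => h (h1.1 hh))]
    · rw [if_neg hmi, ← mul_sub]
      push_neg at hmi
      have himem : i ∉ m.support := Finsupp.notMem_support_iff.2 hmi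
      have heq : ∀ (b : Bool), (∀ j ∈ m.support, Function.update x i b j = true)
          ↔ (∀ j ∈ m.support, x j = true) := by
        intro b
        constructor <;> intro h j hj
        · have := h j hj
          rwa [Function.update_of_ne (fun hji : j = i => himem (hji ▸ hj))] at this
        · rw [Function.update_of_ne (fun hji : j = i => himem (hji ▸ hj))]
          exact h j hj
      by_cases h : ∀ j ∈ m.support, x j = true
      · rw [if_pos ((heq true).2 h), if_pos ((heq false).2 h)]; ring
      · rw [if_neg (fun hh => h ((heq true).1 hh)), if_neg (fun hh => h ((heq false).1 hh))]
        ring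
  have flipiff : ∀ x : Fin n → Bool, f (flip1 x i) ≠ f x ↔ D x ≠ 0 := by
    have hbv : ∀ a b : Bool, a ≠ b ↔ bval a - bval b ≠ 0 := by
      intro a b
      rw [sub_ne_zero]
      cases a <;> cases b <;> norm_num [bval]
    intro x
    cases hxi : x i
    · have hx1 : flip1 x i = Function.update x i true := by rw [flip1, hxi]; rfl
      have hx0 : Function.update x i false = x := by
        rw [← hxi]; exact Function.update_eq_self i x
      rw [← deriv x, hx1, hx0]
      exact hbv _ _
    · have hx1 : flip1 x i = Function.update x i false := by rw [flip1, hxi]; rfl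
      have hx0 : Function.update x i true = x := by
        rw [← hxi]; exact Function.update_eq_self i x
      rw [← deriv x, hx1, hx0, hbv (f (Function.update x i false)) (f x)]
      constructor <;> intro h hc <;> apply h <;> linarith
  -- G is nonempty
  obtain ⟨x₀, hx₀⟩ := hrel
  have hDx₀ : D x₀ ≠ 0 := (flipiff x₀).1 hx₀
  have hGne : G.Nonempty := by
    by_contra hc
    rw [Finset.not_nonempty_iff_eq_empty] at hc
    apply hDx₀
    simp only [hD, hc, Finset.sum_empty]
  -- pick a monomial of maximal support in G
  obtain ⟨m0, hm0G, hm0max⟩ := Finset.exists_max_image G (fun m => m.support.card) hGne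
  have hm0P : m0 ∈ P.support := (Finset.mem_filter.1 hm0G).1
  have hm0i : i ∈ m0.support := Finsupp.mem_support_iff.2 (Finset.mem_filter.1 hm0G).2
  set T := m0.support.erase i with hT
  have hTcard : T.card + 1 = m0.support.card := Finset.card_erase_add_one hm0i
  have hdeg : degI P i = m0.support.card := by
    apply le_antisymm
    · apply Finset.sup_le
      intro m hm
      rw [ml_sum (hP.1 m (Finset.mem_filter.1 hm).1)]
      exact hm0max m hm
    · have h := Finset.le_sup (f := fun m : Fin n →₀ ℕ => m.sum fun _ e => e) hm0G
      simp only [ml_sum (hP.1 m0 hm0P)] at h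
      rw [hG] at h
      exact h
  have huniq : ∀ m ∈ G, T ⊆ m.support.erase i → m = m0 := by
    intro m hm hsub
    have hmi : i ∈ m.support := Finsupp.mem_support_iff.2 (Finset.mem_filter.1 hm).2
    have hsupp : m0.support ⊆ m.support := by
      intro j hj
      by_cases hji : j = i
      · subst hji; exact hmi
      · exact Finset.mem_of_mem_erase (hsub (Finset.mem_erase.2 ⟨hji, hj⟩))
    have hcard : m.support.card ≤ m0.support.card := hm0max m hm
    have hss : m0.support = m.support := Finset.eq_of_subset_of_card_le hsupp hcard
    exact ml_ext (hP.1 m (Finset.mem_filter.1 hm).1) (hP.1 m0 hm0P) hss.symm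
  -- each subcube contains a point where D is nonzero
  have subcube : ∀ z : Fin n → Bool,
      ∃ w : Finset (Fin n), D (fun j => if j ∈ T then (if j ∈ w then true else false) else z j) ≠ 0 := by
    intro z
    by_contra hc
    push_neg at hc
    have hDpt : ∀ w : Finset (Fin n),
        D (fun j => if j ∈ T then (if j ∈ w then true else false) else z j)
          = ∑ m ∈ G, P.coeff m * (if ∀ j ∈ m.support.erase i \ T, z j = true then (1:ℝ) else 0) *
              (if m.support.erase i ∩ T ⊆ w then (1:ℝ) else 0) := by
      intro w
      simp only [hD]
      refine Finset.sum_congr rfl fun m hm => ?_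
      have hiff : (∀ j ∈ m.support.erase i,
            (if j ∈ T then (if j ∈ w then true else false) else z j) = true)
          ↔ (m.support.erase i ∩ T ⊆ w ∧ ∀ j ∈ m.support.erase i \ T, z j = true) := by
        constructor
        · intro h
          constructor
          · intro j hj
            have h2 := h j (Finset.mem_inter.1 hj).1
            rw [if_pos (Finset.mem_inter.1 hj).2] at h2
            by_contra hjw
            rw [if_neg hjw] at h2
            exact Bool.false_ne_true h2
          · intro j hj
            have h2 := h j (Finset.mem_sdiff.1 hj).1
            rwa [if_neg (Finset.mem_sdiff.1 hj).2] at h2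
        · rintro ⟨h1, h2⟩ j hj
          by_cases hjT : j ∈ T
          · rw [if_pos hjT, if_pos (h1 (Finset.mem_inter.2 ⟨hj, hjT⟩))]
          · rw [if_neg hjT]
            exact h2 j (Finset.mem_sdiff.2 ⟨hj, hjT⟩)
      by_cases hc1 : m.support.erase i ∩ T ⊆ w <;>
        by_cases hc2 : ∀ j ∈ m.support.erase i \ T, z j = true
      · rw [if_pos (hiff.2 ⟨hc1, hc2⟩), if_pos hc2, if_pos hc1]; ring
      · rw [if_neg (fun h => hc2 (hiff.1 h).2), if_neg hc2]; ring
      · rw [if_neg (fun h => hc1 (hiff.1 h).1), if_pos hc2, if_neg hc1]; ring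
      · rw [if_neg (fun h => hc2 (hiff.1 h).2), if_neg hc2]; ring
    have hsum : ∑ w ∈ T.powerset, (-1:ℝ) ^ ((T \ w).card) *
        D (fun j => if j ∈ T then (if j ∈ w then true else false) else z j) = P.coeff m0 := by
      calc ∑ w ∈ T.powerset, (-1:ℝ) ^ ((T \ w).card) *
            D (fun j => if j ∈ T then (if j ∈ w then true else false) else z j)
          = ∑ w ∈ T.powerset, ∑ m ∈ G,
              P.coeff m * (if ∀ j ∈ m.support.erase i \ T, z j = true then (1:ℝ) else 0) *
                ((-1:ℝ) ^ ((T \ w).card) * (if m.support.erase i ∩ T ⊆ w then (1:ℝ) else 0)) := by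
            refine Finset.sum_congr rfl fun w _ => ?_
            rw [hDpt w, Finset.mul_sum]
            exact Finset.sum_congr rfl fun m _ => by ring
        _ = ∑ m ∈ G,
              P.coeff m * (if ∀ j ∈ m.support.erase i \ T, z j = true then (1:ℝ) else 0) *
                (∑ w ∈ T.powerset, (-1:ℝ) ^ ((T \ w).card) *
                  (if m.support.erase i ∩ T ⊆ w then (1:ℝ) else 0)) := by
            rw [Finset.sum_comm]
            exact Finset.sum_congr rfl fun m _ => (Finset.mul_sum _ _ _).symm
        _ = ∑ m ∈ G,
              P.coeff m * (if ∀ j ∈ m.support.erase i \ T, z j = true then (1:ℝ) else 0) *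
                (if m.support.erase i ∩ T = T then (1:ℝ) else 0) := by
            refine Finset.sum_congr rfl fun m _ => ?_
            rw [alt_sum _ T Finset.inter_subset_right]
        _ = P.coeff m0 := by
            rw [Finset.sum_eq_single m0]
            · have h1 : m0.support.erase i ∩ T = T := by rw [← hT, Finset.inter_self]
              have h2 : ∀ j ∈ m0.support.erase i \ T, z j = true := by
                intro j hj
                rw [← hT, Finset.sdiff_self] at hj
                exact absurd hj (Finset.notMem_empty j)
              rw [if_pos h1, if_pos h2, mul_one, mul_one]
            · intro m hm hne
              by_cases hTm : m.support.erase i ∩ T = T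
              · exact absurd (huniq m hm (Finset.inter_eq_right.1 hTm)) hne
              · rw [if_neg hTm, mul_zero]
            · intro h
              exact absurd hm0G h
    have hzero : (0:ℝ) = P.coeff m0 := by
      rw [← hsum]
      refine (Finset.sum_eq_zero fun w _ => ?_).symm
      rw [hc w, mul_zero]
    exact (MvPolynomial.mem_support_iff.1 hm0P) hzero.symm
  -- counting
  choose wz hwz using subcube
  classical
  set φ : (Fin n → Bool) → (Fin n → Bool) :=
    fun z => fun j => if j ∈ T then (if j ∈ wz z then true else false) else z j with hφ
  set Z := Finset.univ.filter (fun z : Fin n → Bool => ∀ j ∈ T, z j = false) with hZ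
  set A := Finset.univ.filter (fun x : Fin n → Bool => f (flip1 x i) ≠ f x) with hA
  have hmaps : ∀ z ∈ Z, φ z ∈ A := fun z _ =>
    Finset.mem_filter.2 ⟨Finset.mem_univ _, (flipiff _).2 (hwz z)⟩
  have hinj : ∀ z1 ∈ Z, ∀ z2 ∈ Z, φ z1 = φ z2 → z1 = z2 := by
    intro z1 h1 z2 h2 he
    funext j
    by_cases hjT : j ∈ T
    · rw [(Finset.mem_filter.1 h1).2 j hjT, (Finset.mem_filter.1 h2).2 j hjT]
    · have h3 := congrFun he j
      simp only [hφ, if_neg hjT] at h3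
      exact h3
  have hcard : Z.card ≤ A.card :=
    Finset.card_le_card_of_injOn φ hmaps fun z1 h1 z2 h2 he =>
      hinj z1 (by simpa using h1) z2 (by simpa using h2) he
  have hTn : T.card ≤ n := by
    calc T.card ≤ (Finset.univ : Finset (Fin n)).card := Finset.card_le_card (Finset.subset_univ T)
      _ = n := by simp
  have hZcard : Z.card = 2 ^ (n - T.card) := by
    have hZeq : Z = Fintype.piFinset
        (fun j => if j ∈ T then ({false} : Finset Bool) else Finset.univ) := by
      ext z
      simp only [hZ, Finset.mem_filter, Fintype.mem_piFinset, Finset.mem_univ, true_and]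
      constructor
      · intro h j
        by_cases hjT : j ∈ T
        · rw [if_pos hjT, h j hjT]; exact Finset.mem_singleton_self _
        · rw [if_neg hjT]; exact Finset.mem_univ _
      · intro h j hjT
        have h2 := h j
        rw [if_pos hjT] at h2
        exact Finset.mem_singleton.1 h2
    rw [hZeq, Fintype.card_piFinset]
    rw [← Finset.prod_sdiff (Finset.subset_univ T)]
    have hp1 : ∏ j ∈ T, (if j ∈ T then ({false} : Finset Bool) else Finset.univ).card = 1 :=
      Finset.prod_eq_one fun j hj => by rw [if_pos hj]; simp
    have hp2 : ∏ j ∈ Finset.univ \ T,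
        (if j ∈ T then ({false} : Finset Bool) else Finset.univ).card = 2 ^ (n - T.card) := by
      rw [Finset.prod_congr rfl (fun j hj => by
        rw [if_neg (Finset.mem_sdiff.1 hj).2]), Finset.prod_const]
      rw [Finset.card_sdiff_of_subset (Finset.subset_univ T)]
      simp
    rw [hp1, hp2, mul_one]
  -- final computation
  have h2T : (2:ℝ) ^ T.card ≠ 0 := two_pow_ne T.card
  calc 2 * ((2:ℝ) ^ degI P i)⁻¹
      = ((2:ℝ) ^ T.card)⁻¹ := by
        have hd : (2:ℝ) ^ degI P i = 2 * 2 ^ T.card := by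
          rw [hdeg, ← hTcard, pow_succ]; ring
        rw [hd]
        field_simp
    _ = (2:ℝ) ^ (n - T.card) / 2 ^ n := by
        have h2 : (2:ℝ) ^ (n - T.card) * 2 ^ T.card = 2 ^ n := by
          rw [← pow_add, Nat.sub_add_cancel hTn]
        rw [eq_div_iff (two_pow_ne n), ← h2]
        field_simp
    _ ≤ (A.card : ℝ) / 2 ^ n := by
        have hcn : (2:ℕ) ^ (n - T.card) ≤ A.card := hZcard ▸ hcard
        have hc : ((2:ℝ)) ^ (n - T.card) ≤ (A.card : ℝ) := by exact_mod_cast hcn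
        gcongr
    _ = influence f i := by
        rw [hA]
        simp only [influence]


end Aux

/-- `W(f) ≤ Inf[f]/2 ≤ deg(f)/2`. -/
theorem stmt_10 {n : ℕ} (f : (Fin n → Bool) → Bool) (P : MvPolynomial (Fin n) ℝ)
    (hP : Represents P f) :
    W P f ≤ (∑ i, influence f i) / 2 ∧
      (∑ i, influence f i) / 2 ≤ (P.totalDegree : ℝ) / 2 := by
  constructor
  · unfold W
    have h1 : ∀ i ∈ relSet f, ((2:ℝ) ^ degI P i)⁻¹ ≤ influence f i / 2 := by
      intro i hi
      have hrel : Relevant f i := (Finset.mem_filter.1 hi).2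
      have h2 := Aux.influence_lower f hP i hrel
      linarith
    calc ∑ i ∈ relSet f, ((2:ℝ) ^ degI P i)⁻¹
        ≤ ∑ i ∈ relSet f, influence f i / 2 := Finset.sum_le_sum h1
      _ ≤ ∑ i : Fin n, influence f i / 2 := by
          apply Finset.sum_le_sum_of_subset_of_nonneg (Finset.subset_univ _)
          intro i _ _
          have h3 : (0:ℝ) ≤ influence f i := by
            unfold influence
            positivity
          linarith
      _ = (∑ i, influence f i) / 2 := by rw [Finset.sum_div]
  · have h4 := Aux.sum_influence_le f hP
    linarith
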